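/- Let a > 0 and let M = (M₁,M₂,M₃) : ℝ → ℝ³ be a differentiable solution of the system Ṁ₁ = -(1/a)M₂M₃ - (3/2)M₂, Ṁ₂ = a M₁M₃ + (3/2)M₁, Ṁ₃ = (1/a - a)M₁M₂. Then the functions t ↦ M₁(t)² + M₂(t)² + M₃(t)² and t ↦ a M₁(t)² + (1/a)M₂(t)² - 3M₃(t) are constant. -/

import Mathlib

open Real

/-- The Lie–Poisson system for the Fefferman metric of the left-invariant CR
structure on `SU(2)` with parameter `a` (and `M₄ = 1`) has the two conserved
quantities `M₁² + M₂² + M₃²` and `a M₁² + (1/a) M₂² - 3 M₃`. -/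
theorem stmt_0 (a : ℝ) (ha : 0 < a) (M₁ M₂ M₃ : ℝ → ℝ)
    (h₁ : ∀ t, HasDerivAt M₁ (-(1 / a) * M₂ t * M₃ t - 3 / 2 * M₂ t) t)
    (h₂ : ∀ t, HasDerivAt M₂ (a * M₁ t * M₃ t + 3 / 2 * M₁ t) t)
    (h₃ : ∀ t, HasDerivAt M₃ ((1 / a - a) * M₁ t * M₂ t) t) :
    (∀ t : ℝ, M₁ t ^ 2 + M₂ t ^ 2 + M₃ t ^ 2 = M₁ 0 ^ 2 + M₂ 0 ^ 2 + M₃ 0 ^ 2) ∧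
    (∀ t : ℝ, a * M₁ t ^ 2 + (1 / a) * M₂ t ^ 2 - 3 * M₃ t
      = a * M₁ 0 ^ 2 + (1 / a) * M₂ 0 ^ 2 - 3 * M₃ 0) := by
  have ha' : a ≠ 0 := ne_of_gt ha
  constructor
  · have key : ∀ t, HasDerivAt (fun t => M₁ t ^ 2 + M₂ t ^ 2 + M₃ t ^ 2) 0 t := by
      intro t
      have := (((h₁ t).pow 2).add ((h₂ t).pow 2)).add ((h₃ t).pow 2)
      convert this using 1
      · rfl
      · rfl
      · rfl
      field_simp
      ring
    intro t
    have : ∀ s, (fun t => M₁ t ^ 2 + M₂ t ^ 2 + M₃ t ^ 2) s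
        = (fun t => M₁ t ^ 2 + M₂ t ^ 2 + M₃ t ^ 2) 0 := fun s =>
      is_const_of_deriv_eq_zero (fun x => (key x).differentiableAt)
        (fun x => (key x).deriv) s 0
    exact this t
  · have key : ∀ t, HasDerivAt (fun t => a * M₁ t ^ 2 + (1 / a) * M₂ t ^ 2 - 3 * M₃ t) 0 t := by
      intro t
      have := ((((h₁ t).pow 2).const_mul a).add (((h₂ t).pow 2).const_mul (1 / a))).sub
        ((h₃ t).const_mul 3)
      convert this using 1
      · rfl
      · rfl
      · rfl
      field_simp
      ring
    intro t
    have : ∀ s, (fun t => a * M₁ t ^ 2 + (1 / a) * M₂ t ^ 2 - 3 * M₃ t) s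
        = (fun t => a * M₁ t ^ 2 + (1 / a) * M₂ t ^ 2 - 3 * M₃ t) 0 := fun s =>
      is_const_of_deriv_eq_zero (fun x => (key x).differentiableAt)
        (fun x => (key x).deriv) s 0
    exact this t
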